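/- Let Δ̃ be a finite reduced crystallographic root system in a real inner product space with Weyl group W̃, positive system Δ̃⁺ and simple roots Π̃, and let Δ ⊆ Δ̃ be a symmetric, closed subsystem (−Δ = Δ, and if α, β ∈ Δ with α + β ∈ Δ̃ then α + β ∈ Δ), so that Δ is itself a root system with positive system Δ⁺ = Δ ∩ Δ̃⁺. Let W be the subgroup of W̃ generated by the reflections s_α for α ∈ Δ, and for w ∈ W let ℓ_Δ(w) = |Δ⁺ ∩ w⁻¹(−Δ⁺)| denote its number of inversions within Δ (its length in the reflection group W), while ℓ̃(w̃) = |Φ_{w̃}| denotes the length in W̃, with Φ_{w̃} = Δ̃⁺ ∩ w̃⁻¹(−Δ̃⁺). Then for w̃ ∈ W̃ the following are equivalent: (i) in every reduced expression w̃ = s_{α̃₁}···s_{α̃_q} as a product of simple reflections (α̃_i ∈ Π̃, q = ℓ̃(w̃)), all the roots α̃₁, …, α̃_q lie in Δ⁺; (ii) w̃ ∈ W and ℓ_Δ(w̃) = ℓ̃(w̃); (iii) Φ_{w̃} ⊆ Δ. -/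

import Mathlib

open scoped InnerProductSpace Classical

/-- A finite reduced crystallographic root system, together with a fixed positive system
(cut out by a linear functional not vanishing on any root), in a real inner product space. -/
structure RootSystemData (E : Type*) [NormedAddCommGroup E] [InnerProductSpace ℝ E] where
  roots : Finset E
  zero_not_mem : (0 : E) ∉ roots
  span_top : Submodule.span ℝ (roots : Set E) = ⊤
  reduced : ∀ α ∈ roots, ∀ t : ℝ, t • α ∈ roots → t = 1 ∨ t = -1
  crystallographic : ∀ α ∈ roots, ∀ β ∈ roots, ∃ n : ℤ, 2 * ⟪β, α⟫_ℝ / ⟪α, α⟫_ℝ = (n : ℝ)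
  reflect_mem : ∀ α ∈ roots, ∀ β ∈ roots, β - (2 * ⟪β, α⟫_ℝ / ⟪α, α⟫_ℝ) • α ∈ roots
  posFun : E →ₗ[ℝ] ℝ
  posFun_ne_zero : ∀ α ∈ roots, posFun α ≠ 0

namespace RootSystemData

variable {E : Type*} [NormedAddCommGroup E] [InnerProductSpace ℝ E] [FiniteDimensional ℝ E]

/-- The orthogonal reflection along the root `α` (reflection through the hyperplane `α^⊥`). -/
noncomputable def reflect (α : E) : E ≃ₗᵢ[ℝ] E := Submodule.reflection (ℝ ∙ α)ᗮ

variable (R : RootSystemData E)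

/-- The Weyl group: the group of isometries generated by the reflections along the roots. -/
noncomputable def weyl : Subgroup (E ≃ₗᵢ[ℝ] E) :=
  Subgroup.closure { s | ∃ α ∈ R.roots, s = reflect α }

/-- The positive roots `Δ⁺`. -/
noncomputable def pos : Finset E := R.roots.filter fun α => 0 < R.posFun α

/-- `ρ`, the half-sum of the positive roots. -/
noncomputable def rho : E := (2 : ℝ)⁻¹ • ∑ α ∈ R.pos, α

/-- The inversion set `Φ_w = Δ⁺ ∩ w⁻¹(Δ⁻)`. -/
noncomputable def inv (w : E ≃ₗᵢ[ℝ] E) : Finset E :=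
  R.pos.filter fun α => -(w α) ∈ R.pos

/-- `⟨Φ_w⟩`, the sum of the elements of the inversion set of `w`. -/
noncomputable def invSum (w : E ≃ₗᵢ[ℝ] E) : E := ∑ α ∈ R.inv w, α

/-- The length of `w`, i.e. the cardinality of its inversion set. -/
noncomputable def len (w : E ≃ₗᵢ[ℝ] E) : ℕ := (R.inv w).card

/-- The affine (dot) action `w · λ = w(λ + ρ) - ρ`. -/
noncomputable def dot (w : E ≃ₗᵢ[ℝ] E) (l : E) : E := w (l + R.rho) - R.rho

/-- Membership in the weight lattice `𝒫`. -/
def IsWeight (l : E) : Prop :=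
  ∀ α ∈ R.roots, ∃ n : ℤ, 2 * ⟪l, α⟫_ℝ / ⟪α, α⟫_ℝ = (n : ℝ)

/-- Membership in the dominant monoid `𝒫⁺`. -/
def IsDominant (l : E) : Prop :=
  R.IsWeight l ∧ ∀ α ∈ R.pos, 0 ≤ ⟪l, α⟫_ℝ

/-- The simple roots: the indecomposable positive roots. -/
noncomputable def simples : Finset E :=
  R.pos.filter fun α => ¬ ∃ β ∈ R.pos, ∃ γ ∈ R.pos, α = β + γ

end RootSystemData

variable {E : Type*} [NormedAddCommGroup E] [InnerProductSpace ℝ E] [FiniteDimensional ℝ E]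

/-- The reflection subgroup of the Weyl group generated by the reflections along the
roots of the subsystem `D`. -/
noncomputable def subWeyl (D : Finset E) : Subgroup (E ≃ₗᵢ[ℝ] E) :=
  Subgroup.closure { s | ∃ α ∈ D, s = RootSystemData.reflect α }

/-- The number of inversions of `w` within the subsystem `D`,
i.e. `ℓ_Δ(w) = |Δ⁺ ∩ w⁻¹(−Δ⁺)|` where `Δ⁺ = Δ ∩ Δ̃⁺`. -/
noncomputable def subLen (R : RootSystemData E) (D : Finset E) (w : E ≃ₗᵢ[ℝ] E) : ℕ :=
  ((D ∩ R.pos).filter fun α => -(w α) ∈ D ∩ R.pos).card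


-- ============ Auxiliary development ============
set_option linter.unusedSectionVars false
set_option maxHeartbeats 1000000

section Aux

open RootSystemData

variable {E : Type*} [NormedAddCommGroup E] [InnerProductSpace ℝ E] [FiniteDimensional ℝ E]

theorem reflect_apply (α x : E) : reflect α x = x - (2 * ⟪x, α⟫_ℝ / ⟪α, α⟫_ℝ) • α := by
  rw [reflect, Submodule.reflection_orthogonal_apply, Submodule.reflection_singleton_apply]
  rw [real_inner_self_eq_norm_sq, real_inner_comm]
  simp only [RCLike.ofReal_real_eq_id, id, two_smul]
  rw [div_eq_mul_inv, div_eq_mul_inv, mul_comm (2:ℝ)]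
  module

theorem reflect_self (α : E) (h : α ≠ 0) : reflect α α = -α := by
  rw [reflect_apply]
  have h2 : ⟪α, α⟫_ℝ ≠ 0 := fun hc => h (inner_self_eq_zero.mp hc)
  rw [mul_div_assoc, div_self h2]
  module

theorem reflect_reflect (α x : E) : reflect α (reflect α x) = x := Submodule.reflection_reflection _ x

theorem reflect_mul_self (α : E) : reflect α * reflect α = 1 := Submodule.reflection_mul_reflection _

theorem reflect_inv (α : E) : (reflect α)⁻¹ = reflect α := Submodule.reflection_inv

theorem reflect_neg (α : E) : reflect (-α) = reflect α := by
  ext x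
  rw [reflect_apply, reflect_apply]
  rw [inner_neg_right, inner_neg_neg]
  rw [smul_neg, mul_neg, neg_div, neg_smul, neg_neg]

theorem reflect_conj (u : E ≃ₗᵢ[ℝ] E) (α : E) :
    reflect (u α) = u * reflect α * u⁻¹ := by
  ext x
  show _ = u (reflect α (u⁻¹ x))
  rw [reflect_apply, reflect_apply, map_sub, LinearIsometryEquiv.map_smul]
  have h1 : ⟪(u⁻¹ x : E), α⟫_ℝ = ⟪x, u α⟫_ℝ := by
    rw [← LinearIsometryEquiv.inner_map_map u]
    congr 1
    exact u.apply_symm_apply x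
  have h2 : ⟪u α, u α⟫_ℝ = ⟪α, α⟫_ℝ := LinearIsometryEquiv.inner_map_map u α α
  rw [h1, h2]
  congr 1
  exact (u.apply_symm_apply x).symm

variable (R : RootSystemData E)

theorem root_ne_zero {α : E} (h : α ∈ R.roots) : α ≠ 0 := fun hc => R.zero_not_mem (hc ▸ h)

theorem root_inner_self_pos {α : E} (h : α ∈ R.roots) : 0 < ⟪α, α⟫_ℝ :=
  by rw [real_inner_self_eq_norm_sq]
     exact pow_pos (norm_pos_iff.mpr (root_ne_zero R h)) 2

theorem neg_root_mem {α : E} (h : α ∈ R.roots) : -α ∈ R.roots := by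
  have := R.reflect_mem α h α h
  have h2 : ⟪α, α⟫_ℝ ≠ 0 := ne_of_gt (root_inner_self_pos R h)
  rw [mul_div_assoc, div_self h2] at this
  convert this using 1
  module

theorem reflect_root_mem {α β : E} (hα : α ∈ R.roots) (hβ : β ∈ R.roots) :
    reflect α β ∈ R.roots := by
  rw [reflect_apply]; exact R.reflect_mem α hα β hβ

theorem pos_subset : R.pos ⊆ R.roots := Finset.filter_subset _ _

theorem posFun_pos_of_mem {α : E} (h : α ∈ R.pos) : 0 < R.posFun α :=
  (Finset.mem_filter.mp h).2

theorem mem_pos_of_root {α : E} (h : α ∈ R.roots) (h2 : 0 < R.posFun α) : α ∈ R.pos :=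
  Finset.mem_filter.mpr ⟨h, h2⟩

theorem root_dichotomy {α : E} (h : α ∈ R.roots) : α ∈ R.pos ∨ -α ∈ R.pos := by
  rcases lt_trichotomy (R.posFun α) 0 with h1 | h1 | h1
  · right
    refine mem_pos_of_root R (neg_root_mem R h) ?_
    rw [map_neg]; linarith
  · exact absurd h1 (R.posFun_ne_zero α h)
  · exact Or.inl (mem_pos_of_root R h h1)

theorem not_both_pos {α : E} (h : α ∈ R.pos) (h2 : -α ∈ R.pos) : False := by
  have := posFun_pos_of_mem R h
  have := posFun_pos_of_mem R h2
  rw [map_neg] at *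
  linarith

theorem neg_not_pos {α : E} (h : α ∈ R.pos) : -α ∉ R.pos := fun hc => not_both_pos R h hc

/-- If two roots have positive inner product and are distinct, their difference is a root. -/
theorem root_sub_root {α β : E} (hα : α ∈ R.roots) (hβ : β ∈ R.roots)
    (hin : 0 < ⟪α, β⟫_ℝ) (hne : α ≠ β) : α - β ∈ R.roots := by
  by_cases hdep : ∃ t : ℝ, α = t • β
  · obtain ⟨t, rfl⟩ := hdep
    rcases R.reduced β hβ t hα with rfl | rfl
    · exact absurd (one_smul ℝ β) hne
    · rw [neg_smul, one_smul, inner_neg_left] at hin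
      have := root_inner_self_pos R hβ
      linarith
  obtain ⟨m, hm⟩ := R.crystallographic β hβ α hα
  obtain ⟨n, hn⟩ := R.crystallographic α hα β hβ
  have hββ := root_inner_self_pos R hβ
  have hαα := root_inner_self_pos R hα
  have hnα : (0:ℝ) < ‖α‖ := norm_pos_iff.mpr (root_ne_zero R hα)
  have hnβ : (0:ℝ) < ‖β‖ := norm_pos_iff.mpr (root_ne_zero R hβ)
  have hin' : 0 < ⟪β, α⟫_ℝ := by rwa [real_inner_comm]
  have hmpos : (0:ℝ) < m := by rw [← hm]; exact div_pos (by linarith) hββ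
  have hnpos : (0:ℝ) < n := by rw [← hn]; exact div_pos (by linarith) hαα
  have hcs : ⟪α, β⟫_ℝ < ‖α‖ * ‖β‖ := by
    rw [inner_lt_norm_mul_iff_real]
    intro hc
    apply hdep
    refine ⟨‖α‖ / ‖β‖, ?_⟩
    apply smul_right_injective E (ne_of_gt hnβ)
    show ‖β‖ • α = ‖β‖ • ((‖α‖ / ‖β‖) • β)
    rw [hc, smul_smul]
    congr 1
    field_simp
  have hprod : (m:ℝ) * n < 4 := by
    have h2 : (n:ℝ) = 2 * ⟪α, β⟫_ℝ / ⟪α, α⟫_ℝ := by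
      rw [← hn, real_inner_comm]
    rw [← hm, h2, real_inner_self_eq_norm_sq, real_inner_self_eq_norm_sq]
    rw [div_mul_div_comm, div_lt_iff₀ (by positivity)]
    have key : ⟪α, β⟫_ℝ * ⟪α, β⟫_ℝ < (‖α‖ * ‖β‖) * (‖α‖ * ‖β‖) :=
      mul_lt_mul'' hcs hcs (le_of_lt hin) (le_of_lt hin)
    nlinarith [key]
  have hm1 : 1 ≤ m := by exact_mod_cast hmpos
  have hn1 : 1 ≤ n := by exact_mod_cast hnpos
  have hmn4 : m * n < 4 := by exact_mod_cast hprod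
  have hor : m = 1 ∨ n = 1 := by
    by_contra hcon
    push_neg at hcon
    have h2 : 2 ≤ m := by omega
    have h3 : 2 ≤ n := by omega
    nlinarith [mul_le_mul h2 h3 (by omega : (0:ℤ) ≤ 2) (by omega : (0:ℤ) ≤ m)]
  rcases hor with h1 | h1
  · have := R.reflect_mem β hβ α hα
    rw [hm, h1] at this
    simpa using this
  · have := R.reflect_mem α hα β hβ
    rw [hn, h1] at this
    have h2 := neg_root_mem R this
    convert h2 using 1
    module

/-- Root strings are unbroken. -/
theorem root_string {γ δ : E} (hγ : γ ∈ R.roots) (hδ : δ ∈ R.roots)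
    (hind : ∀ t : ℝ, δ ≠ t • γ) (m : ℕ) (hm : δ + (m:ℝ) • γ ∈ R.roots) :
    ∀ j ≤ m, δ + (j:ℝ) • γ ∈ R.roots := by
  by_contra hcon
  push_neg at hcon
  have hex : ∃ j, j ≤ m ∧ δ + (j:ℝ) • γ ∉ R.roots := by
    obtain ⟨j, hj1, hj2⟩ := hcon; exact ⟨j, hj1, hj2⟩
  classical
  set k := Nat.find hex with hkdef
  obtain ⟨hkm, hknot⟩ : k ≤ m ∧ δ + (k:ℝ) • γ ∉ R.roots := Nat.find_spec hex
  have hk0 : 0 < k := by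
    rcases Nat.eq_zero_or_pos k with h | h
    · exfalso; apply hknot; rw [h]; simpa using hδ
    · exact h
  have hkm' : k < m := by
    rcases lt_or_eq_of_le hkm with h | h
    · exact h
    · exfalso; apply hknot; rw [h]; exact hm
  have hex2 : ∃ j, (k < j ∧ j ≤ m) ∧ δ + (j:ℝ) • γ ∈ R.roots := ⟨m, ⟨hkm', le_refl m⟩, hm⟩
  set s := Nat.find hex2 with hsdef
  obtain ⟨⟨hks, hsm⟩, hsroot⟩ : (k < s ∧ s ≤ m) ∧ δ + (s:ℝ) • γ ∈ R.roots := Nat.find_spec hex2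
  have hgap : ∀ j, k ≤ j → j < s → δ + (j:ℝ) • γ ∉ R.roots := by
    intro j hj1 hj2
    rcases eq_or_lt_of_le hj1 with rfl | h
    · exact hknot
    · intro hroot
      exact Nat.find_min hex2 hj2 ⟨⟨h, le_trans (le_of_lt hj2) hsm⟩, hroot⟩
  have hβ1 : δ + ((k:ℝ) - 1) • γ ∈ R.roots := by
    have hlt : k - 1 < k := by omega
    have h2 := Nat.find_min hex hlt
    push_neg at h2
    have h3 := h2 (by omega)
    have hcast : ((k - 1 : ℕ) : ℝ) = (k:ℝ) - 1 := by
      push_cast [Nat.cast_sub (by omega : 1 ≤ k)]; ring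
    rwa [hcast] at h3
  have hβ1γ : δ + ((k:ℝ) - 1) • γ + γ ∉ R.roots := by
    have heq : δ + ((k:ℝ) - 1) • γ + γ = δ + (k:ℝ) • γ := by module
    rw [heq]; exact hknot
  have hβ2γ : δ + (s:ℝ) • γ - γ ∉ R.roots := by
    have heq : δ + (s:ℝ) • γ - γ = δ + ((s:ℝ) - 1) • γ := by module
    rw [heq]
    have h1 : ((s - 1 : ℕ) : ℝ) = (s:ℝ) - 1 := by
      push_cast [Nat.cast_sub (by omega : 1 ≤ s)]; ring
    rw [← h1]
    exact hgap (s-1) (by omega) (by omega)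
  have hin1 : 0 ≤ ⟪δ + ((k:ℝ) - 1) • γ, γ⟫_ℝ := by
    by_contra hneg
    push_neg at hneg
    have h2 : 0 < ⟪δ + ((k:ℝ) - 1) • γ, -γ⟫_ℝ := by
      rw [inner_neg_right]; linarith
    have hne : δ + ((k:ℝ) - 1) • γ ≠ -γ := by
      intro hc2
      refine hind (-(k:ℝ)) ?_
      linear_combination (norm := module) hc2
    have h3 := root_sub_root R hβ1 (neg_root_mem R hγ) h2 hne
    apply hβ1γ
    convert h3 using 1
    module
  have hin2 : ⟪δ + (s:ℝ) • γ, γ⟫_ℝ ≤ 0 := by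
    by_contra hneg
    push_neg at hneg
    have hne : δ + (s:ℝ) • γ ≠ γ := by
      intro hc2
      refine hind (1 - (s:ℝ)) ?_
      linear_combination (norm := module) hc2
    exact hβ2γ (root_sub_root R hsroot hγ hneg hne)
  have hγγ := root_inner_self_pos R hγ
  rw [inner_add_left, real_inner_smul_left] at hin1 hin2
  have hks' : (k:ℝ) - 1 < (s:ℝ) := by
    have : (k:ℝ) < s := by exact_mod_cast hks
    linarith
  nlinarith [mul_pos (show (0:ℝ) < (s:ℝ) - ((k:ℝ)-1) by linarith) hγγ]

/-- Stability of a symmetric closed subsystem under adding a multiple of a root. -/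
theorem sub_stable_aux (D : Finset E) (hsub : D ⊆ R.roots)
    (hclosed : ∀ α ∈ D, ∀ β ∈ D, α + β ∈ R.roots → α + β ∈ D)
    {γ δ : E} (hγ : γ ∈ D) (hδ : δ ∈ D) (hind : ∀ t : ℝ, δ ≠ t • γ)
    (k : ℕ) (hk : δ + (k:ℝ) • γ ∈ R.roots) : δ + (k:ℝ) • γ ∈ D := by
  have hγr := hsub hγ
  have hδr := hsub hδ
  have hstring := root_string R hγr hδr hind k hk
  have key : ∀ j ≤ k, δ + (j:ℝ) • γ ∈ D := by
    intro j hj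
    induction j with
    | zero => simpa using hδ
    | succ i ih =>
      have hi := ih (by omega)
      have hroot : δ + ((i:ℝ)+1) • γ ∈ R.roots := by
        have h5 := hstring (i+1) hj
        push_cast at h5
        exact h5
      have h6 : (δ + (i:ℝ) • γ) + γ ∈ D := by
        apply hclosed _ hi _ hγ
        have heq : δ + (i:ℝ) • γ + γ = δ + ((i:ℝ)+1) • γ := by module
        rw [heq]; exact hroot
      push_cast
      have heq : δ + ((i:ℝ)+1) • γ = (δ + (i:ℝ) • γ) + γ := by module
      rw [heq]; exact h6
  exact key k (le_refl k)

/-- A symmetric closed subsystem is stable under its own reflections. -/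
theorem sub_stable (D : Finset E) (hsub : D ⊆ R.roots)
    (hsymm : ∀ α ∈ D, -α ∈ D)
    (hclosed : ∀ α ∈ D, ∀ β ∈ D, α + β ∈ R.roots → α + β ∈ D)
    {γ δ : E} (hγ : γ ∈ D) (hδ : δ ∈ D) : reflect γ δ ∈ D := by
  have hγr := hsub hγ
  have hδr := hsub hδ
  by_cases hdep : ∃ t : ℝ, δ = t • γ
  · obtain ⟨t, rfl⟩ := hdep
    rcases R.reduced γ hγr t hδr with rfl | rfl
    · rw [one_smul, reflect_self γ (root_ne_zero R hγr)]
      exact hsymm γ hγ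
    · rw [neg_smul, one_smul, map_neg, reflect_self γ (root_ne_zero R hγr), neg_neg]
      exact hγ
  push_neg at hdep
  obtain ⟨m, hm⟩ := R.crystallographic γ hγr δ hδr
  have hrefl : reflect γ δ = δ - (m:ℝ) • γ := by rw [reflect_apply, hm]
  have hreflroot : reflect γ δ ∈ R.roots := reflect_root_mem R hγr hδr
  rcases le_or_gt m 0 with hm0 | hm0
  · have h1 : δ - (m:ℝ) • γ = δ + (((-m).toNat : ℕ):ℝ) • γ := by
      have h2 : (((-m).toNat : ℕ):ℝ) = -(m:ℝ) := by
        have h3 := Int.toNat_of_nonneg (by omega : 0 ≤ -m)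
        exact_mod_cast congrArg (Int.cast : ℤ → ℝ) h3
      rw [h2]; module
    rw [hrefl, h1]
    exact sub_stable_aux R D hsub hclosed hγ hδ hdep _ (by rw [← h1, ← hrefl]; exact hreflroot)
  · have hγ' : -γ ∈ D := hsymm γ hγ
    have h1 : δ - (m:ℝ) • γ = δ + ((m.toNat : ℕ):ℝ) • (-γ) := by
      have h2 : ((m.toNat : ℕ):ℝ) = (m:ℝ) := by
        have h3 := Int.toNat_of_nonneg (by omega : 0 ≤ m)
        exact_mod_cast congrArg (Int.cast : ℤ → ℝ) h3
      rw [h2]; module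
    rw [hrefl, h1]
    refine sub_stable_aux R D hsub hclosed hγ' hδ ?_ _ (by rw [← h1, ← hrefl]; exact hreflroot)
    intro t hc
    exact hdep (-t) (by rw [hc]; module)

theorem simples_subset_pos : R.simples ⊆ R.pos := Finset.filter_subset _ _

theorem not_decomposable {α : E} (hα : α ∈ R.simples) :
    ¬ ∃ β ∈ R.pos, ∃ γ ∈ R.pos, α = β + γ := (Finset.mem_filter.mp hα).2

/-- Distinct simple roots form obtuse angles. -/
theorem simples_obtuse {α β : E} (hα : α ∈ R.simples) (hβ : β ∈ R.simples)
    (hne : α ≠ β) : ⟪α, β⟫_ℝ ≤ 0 := by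
  by_contra hcon
  push_neg at hcon
  have hαp := simples_subset_pos R hα
  have hβp := simples_subset_pos R hβ
  have hαr := pos_subset R hαp
  have hβr := pos_subset R hβp
  have hroot := root_sub_root R hαr hβr hcon hne
  rcases root_dichotomy R hroot with h | h
  · exact not_decomposable R hα ⟨β, hβp, α - β, h, by module⟩
  · have h2 : β - α ∈ R.pos := by
      have : -(α - β) = β - α := by module
      rwa [this] at h
    exact not_decomposable R hβ ⟨α, hαp, β - α, h2, by module⟩

/-- The simple roots are linearly independent. -/
theorem simples_indep (c : E → ℝ) (h : ∑ γ ∈ R.simples, c γ • γ = 0) :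
    ∀ γ ∈ R.simples, c γ = 0 := by
  classical
  set P := R.simples.filter (fun γ => 0 < c γ) with hP
  set N := R.simples.filter (fun γ => c γ < 0) with hN
  have hsplit : ∑ γ ∈ P, c γ • γ + ∑ γ ∈ N, c γ • γ = 0 := by
    rw [← h]
    rw [← Finset.sum_filter_add_sum_filter_not R.simples (fun γ => 0 < c γ)]
    congr 1
    apply Finset.sum_subset
    · intro x hx
      have hx' := Finset.mem_filter.mp hx
      exact Finset.mem_filter.mpr ⟨hx'.1, by linarith [hx'.2]⟩
    · intro x hx hnx
      have hx' := Finset.mem_filter.mp hx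
      have hcx : c x = 0 := by
        by_contra hc0
        rcases lt_or_gt_of_ne hc0 with h1 | h1
        · exact hnx (Finset.mem_filter.mpr ⟨hx'.1, h1⟩)
        · exact hx'.2 h1
      simp [hcx]
  set v := ∑ γ ∈ P, c γ • γ with hv
  have hveq : v = ∑ γ ∈ N, (-(c γ)) • γ := by
    have h9 : ∑ γ ∈ N, (-(c γ)) • γ = -∑ γ ∈ N, c γ • γ := by
      rw [← Finset.sum_neg_distrib]
      apply Finset.sum_congr rfl
      intro x _
      rw [neg_smul]
    rw [h9]
    linear_combination (norm := module) hsplit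
  have hPN : ∀ γ ∈ P, ∀ δ ∈ N, γ ≠ δ := by
    intro γ hγ δ hδ hc
    have hγ' := Finset.mem_filter.mp hγ
    have hδ' := Finset.mem_filter.mp hδ
    rw [hc] at hγ'
    linarith [hγ'.2, hδ'.2]
  have hvv : ⟪v, v⟫_ℝ ≤ 0 := by
    nth_rewrite 2 [hveq]
    rw [inner_sum]
    apply Finset.sum_nonpos
    intro δ hδ
    rw [real_inner_smul_right, hv, sum_inner]
    apply mul_nonpos_of_nonneg_of_nonpos
    · have hδ' := Finset.mem_filter.mp hδ
      linarith [hδ'.2]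
    · apply Finset.sum_nonpos
      intro γ hγ
      rw [real_inner_smul_left]
      have hγ' := Finset.mem_filter.mp hγ
      have hδ' := Finset.mem_filter.mp hδ
      have hobt := simples_obtuse R hγ'.1 hδ'.1 (hPN γ hγ δ hδ)
      have := hγ'.2
      nlinarith
  have hv0 : v = 0 := by
    have h1 : 0 ≤ ⟪v, v⟫_ℝ := real_inner_self_nonneg
    have h2 : ⟪v, v⟫_ℝ = 0 := le_antisymm hvv h1
    exact inner_self_eq_zero.mp h2
  have hPe : P = ∅ := by
    by_contra hPe
    have h1 : 0 < ∑ γ ∈ P, c γ * R.posFun γ := by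
      apply Finset.sum_pos
      · intro γ hγ
        have hγ' := Finset.mem_filter.mp hγ
        exact mul_pos hγ'.2 (posFun_pos_of_mem R (simples_subset_pos R hγ'.1))
      · exact Finset.nonempty_of_ne_empty hPe
    have h2 : R.posFun v = ∑ γ ∈ P, c γ * R.posFun γ := by
      rw [hv, map_sum]
      apply Finset.sum_congr rfl
      intro γ _
      rw [map_smul, smul_eq_mul]
    rw [hv0, map_zero] at h2
    linarith
  have hNe : N = ∅ := by
    by_contra hNe
    have h1 : 0 < ∑ γ ∈ N, (-(c γ)) * R.posFun γ := by
      apply Finset.sum_pos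
      · intro γ hγ
        have hγ' := Finset.mem_filter.mp hγ
        exact mul_pos (by linarith [hγ'.2]) (posFun_pos_of_mem R (simples_subset_pos R hγ'.1))
      · exact Finset.nonempty_of_ne_empty hNe
    have h2 : R.posFun (∑ γ ∈ N, (-(c γ)) • γ) = ∑ γ ∈ N, (-(c γ)) * R.posFun γ := by
      rw [map_sum]
      apply Finset.sum_congr rfl
      intro γ _
      rw [map_smul, smul_eq_mul]
    rw [← hveq, hv0, map_zero] at h2
    linarith
  intro γ hγ
  by_contra hc0
  rcases lt_or_gt_of_ne hc0 with h1 | h1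
  · have h3 : γ ∈ N := Finset.mem_filter.mpr ⟨hγ, h1⟩
    rw [hNe] at h3
    exact absurd h3 (Finset.notMem_empty γ)
  · have h3 : γ ∈ P := Finset.mem_filter.mpr ⟨hγ, h1⟩
    rw [hPe] at h3
    exact absurd h3 (Finset.notMem_empty γ)

/-- The measure used for induction on positive roots. -/
noncomputable def meas (β : E) : ℕ := (R.pos.filter fun δ => R.posFun δ < R.posFun β).card

theorem meas_lt {β δ : E} (hδ : δ ∈ R.pos) (h : R.posFun δ < R.posFun β) :
    meas R δ < meas R β := by
  apply Finset.card_lt_card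
  rw [Finset.ssubset_iff_of_subset]
  · refine ⟨δ, Finset.mem_filter.mpr ⟨hδ, h⟩, fun hc => ?_⟩
    have := (Finset.mem_filter.mp hc).2
    linarith
  · intro x hx
    rw [Finset.mem_filter] at hx ⊢
    exact ⟨hx.1, by linarith [hx.2]⟩

/-- Every positive root is a nonnegative combination of simple roots. -/
theorem pos_combo {β : E} (hβ : β ∈ R.pos) :
    ∃ c : E → ℝ, (∀ γ, 0 ≤ c γ) ∧ β = ∑ γ ∈ R.simples, c γ • γ := by
  classical
  suffices h : ∀ (n : ℕ) (β : E), β ∈ R.pos → meas R β ≤ n →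
      ∃ c : E → ℝ, (∀ γ, 0 ≤ c γ) ∧ β = ∑ γ ∈ R.simples, c γ • γ by
    exact h (meas R β) β hβ (le_refl _)
  intro n
  induction n using Nat.strong_induction_on with
  | _ n ih =>
    intro β hβ hm
    by_cases hs : β ∈ R.simples
    · refine ⟨fun γ => if γ = β then 1 else 0, fun γ => by by_cases h : γ = β <;> simp [h], ?_⟩
      have : ∀ γ ∈ R.simples, (if γ = β then (1:ℝ) else 0) • γ = if γ = β then γ else 0 := by
        intro γ _
        split <;> simp
      rw [Finset.sum_congr rfl this, Finset.sum_ite_eq' R.simples β (fun γ => γ)]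
      simp [hs]
    · have hdec : ∃ β₁ ∈ R.pos, ∃ β₂ ∈ R.pos, β = β₁ + β₂ := by
        by_contra hc
        exact hs (Finset.mem_filter.mpr ⟨hβ, hc⟩)
      obtain ⟨β₁, h₁, β₂, h₂, heq⟩ := hdec
      have hf : R.posFun β = R.posFun β₁ + R.posFun β₂ := by rw [heq, map_add]
      have hp1 := posFun_pos_of_mem R h₁
      have hp2 := posFun_pos_of_mem R h₂
      have hm1 : meas R β₁ < meas R β := meas_lt R h₁ (by linarith)
      have hm2 : meas R β₂ < meas R β := meas_lt R h₂ (by linarith)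
      obtain ⟨c₁, hc₁, he₁⟩ := ih (meas R β₁) (by omega) β₁ h₁ (le_refl _)
      obtain ⟨c₂, hc₂, he₂⟩ := ih (meas R β₂) (by omega) β₂ h₂ (le_refl _)
      refine ⟨fun γ => c₁ γ + c₂ γ, fun γ => add_nonneg (hc₁ γ) (hc₂ γ), ?_⟩
      rw [heq, he₁, he₂, ← Finset.sum_add_distrib]
      apply Finset.sum_congr rfl
      intro γ _
      rw [add_smul]

/-- A simple reflection sends every other positive root to a positive root. -/
theorem reflect_simple_pos {α β : E} (hα : α ∈ R.simples) (hβ : β ∈ R.pos)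
    (hne : β ≠ α) : reflect α β ∈ R.pos := by
  classical
  have hαp := simples_subset_pos R hα
  have hαr := pos_subset R hαp
  have hβr := pos_subset R hβ
  have hreflroot : reflect α β ∈ R.roots := reflect_root_mem R hαr hβr
  rcases root_dichotomy R hreflroot with h | h
  · exact h
  · exfalso
    obtain ⟨c, hc, hce⟩ := pos_combo R hβ
    obtain ⟨d, hd, hde⟩ := pos_combo R h
    set nval := 2 * ⟪β, α⟫_ℝ / ⟪α, α⟫_ℝ with hnval
    have hZero : ∑ γ ∈ R.simples, (c γ + d γ - (if γ = α then nval else 0)) • γ = 0 := by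
      have hsum : ∑ γ ∈ R.simples, (c γ + d γ - (if γ = α then nval else 0)) • γ =
          (∑ γ ∈ R.simples, c γ • γ) + (∑ γ ∈ R.simples, d γ • γ)
            - ∑ γ ∈ R.simples, (if γ = α then nval else 0) • γ := by
        rw [← Finset.sum_add_distrib, ← Finset.sum_sub_distrib]
        apply Finset.sum_congr rfl
        intro γ _
        rw [sub_smul, add_smul]
      have hite : ∑ γ ∈ R.simples, (if γ = α then nval else 0) • γ = nval • α := by
        have : ∀ γ ∈ R.simples, (if γ = α then nval else 0) • γ
            = if γ = α then nval • γ else 0 := by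
          intro γ _
          split <;> simp
        rw [Finset.sum_congr rfl this, Finset.sum_ite_eq' R.simples α (fun γ => nval • γ)]
        simp [hα]
      rw [hsum, hite, ← hce, ← hde]
      have : reflect α β = β - nval • α := by rw [reflect_apply]
      rw [this]
      module
    have hzero := simples_indep R _ hZero
    have hcγ : ∀ γ ∈ R.simples, γ ≠ α → c γ = 0 := by
      intro γ hγ hγα
      have h1 := hzero γ hγ
      rw [if_neg hγα] at h1
      have := hc γ
      have := hd γ
      linarith
    have hβα : β = c α • α := by
      rw [hce]
      apply Finset.sum_eq_single α
      · intro γ hγ hγα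
        rw [hcγ γ hγ hγα, zero_smul]
      · intro hc'
        exact absurd hα hc'
    rcases R.reduced α hαr (c α) (by rw [← hβα]; exact hβr) with h1 | h1
    · rw [h1, one_smul] at hβα
      exact hne hβα
    · rw [h1, neg_smul, one_smul] at hβα
      apply not_both_pos R hαp
      rw [← hβα]
      exact hβ

theorem mem_invSet {w : E ≃ₗᵢ[ℝ] E} {β : E} :
    β ∈ R.inv w ↔ β ∈ R.pos ∧ -(w β) ∈ R.pos := Finset.mem_filter

theorem rs_inv_one : R.inv 1 = ∅ := by
  ext β
  rw [mem_invSet]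
  simp only [Finset.notMem_empty, iff_false]
  rintro ⟨h1, h2⟩
  exact not_both_pos R h1 h2

theorem rs_len_one : R.len 1 = 0 := by rw [len, rs_inv_one, Finset.card_empty]

theorem word_maps_roots (L : List E) (hL : ∀ γ ∈ L, γ ∈ R.roots) {β : E} (hβ : β ∈ R.roots) :
    (L.map reflect).prod β ∈ R.roots := by
  induction L with
  | nil => simpa using hβ
  | cons γ T ih =>
    have h1 : ((γ :: T).map reflect).prod = reflect γ * (T.map reflect).prod := by
      rw [List.map_cons, List.prod_cons]
    rw [h1]
    show reflect γ ((T.map reflect).prod β) ∈ R.roots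
    exact reflect_root_mem R (hL γ (List.mem_cons_self))
      (ih (fun δ hδ => hL δ (List.mem_cons_of_mem γ hδ)))

theorem inv_mul_reflect_of_pos (w : E ≃ₗᵢ[ℝ] E) {α : E} (hα : α ∈ R.simples)
    (h : w α ∈ R.pos) :
    R.inv (w * reflect α) = insert α ((R.inv w).image (reflect α)) := by
  have hαp := simples_subset_pos R hα
  have hαr := pos_subset R hαp
  have hα0 := root_ne_zero R hαr
  ext β
  rw [mem_invSet, Finset.mem_insert, Finset.mem_image]
  constructor
  · rintro ⟨hβp, hβn⟩
    by_cases hβα : β = α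
    · exact Or.inl hβα
    · right
      refine ⟨reflect α β, ?_, reflect_reflect α β⟩
      rw [mem_invSet]
      exact ⟨reflect_simple_pos R hα hβp hβα, hβn⟩
  · rintro (rfl | ⟨δ, hδ, rfl⟩)
    · refine ⟨hαp, ?_⟩
      show -(w (reflect β β)) ∈ R.pos
      rw [reflect_self β hα0, map_neg, neg_neg]
      exact h
    · rw [mem_invSet] at hδ
      obtain ⟨hδp, hδn⟩ := hδ
      have hδα : δ ≠ α := by
        rintro rfl
        exact not_both_pos R h hδn
      refine ⟨reflect_simple_pos R hα hδp hδα, ?_⟩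
      show -(w (reflect α (reflect α δ))) ∈ R.pos
      rw [reflect_reflect]
      exact hδn

theorem len_mul_reflect_of_pos (w : E ≃ₗᵢ[ℝ] E) {α : E} (hα : α ∈ R.simples)
    (h : w α ∈ R.pos) : R.len (w * reflect α) = R.len w + 1 := by
  rw [len, len, inv_mul_reflect_of_pos R w hα h]
  have hnotmem : α ∉ (R.inv w).image (reflect α) := by
    rw [Finset.mem_image]
    rintro ⟨δ, hδ, hδe⟩
    have h4 := congrArg (reflect α) hδe
    rw [reflect_reflect, reflect_self α (root_ne_zero R (pos_subset R (simples_subset_pos R hα)))] at h4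
    rw [mem_invSet] at hδ
    apply not_both_pos R (simples_subset_pos R hα)
    rw [← h4]
    exact hδ.1
  rw [Finset.card_insert_of_notMem hnotmem,
    Finset.card_image_of_injective _ (reflect α).injective]

theorem inv_mul_reflect_of_neg (w : E ≃ₗᵢ[ℝ] E) {α : E} (hα : α ∈ R.simples)
    (h : -(w α) ∈ R.pos) :
    R.inv (w * reflect α) = ((R.inv w).erase α).image (reflect α) := by
  have hαp := simples_subset_pos R hα
  have hαr := pos_subset R hαp
  have hα0 := root_ne_zero R hαr
  ext β
  rw [mem_invSet, Finset.mem_image]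
  constructor
  · rintro ⟨hβp, hβn⟩
    have hβα : β ≠ α := by
      rintro rfl
      have h2 : -(w (reflect β β)) ∈ R.pos := hβn
      rw [reflect_self β hα0, map_neg, neg_neg] at h2
      exact not_both_pos R h2 h
    refine ⟨reflect α β, ?_, reflect_reflect α β⟩
    rw [Finset.mem_erase, mem_invSet]
    refine ⟨?_, reflect_simple_pos R hα hβp hβα, hβn⟩
    intro hc
    have h4 := congrArg (reflect α) hc
    rw [reflect_reflect, reflect_self α hα0] at h4
    apply not_both_pos R hαp
    rw [← h4]
    exact hβp
  · rintro ⟨δ, hδ, rfl⟩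
    rw [Finset.mem_erase, mem_invSet] at hδ
    obtain ⟨hδα, hδp, hδn⟩ := hδ
    refine ⟨reflect_simple_pos R hα hδp hδα, ?_⟩
    show -(w (reflect α (reflect α δ))) ∈ R.pos
    rw [reflect_reflect]
    exact hδn

theorem len_mul_reflect_of_neg (w : E ≃ₗᵢ[ℝ] E) {α : E} (hα : α ∈ R.simples)
    (h : -(w α) ∈ R.pos) :
    R.len (w * reflect α) + 1 = R.len w ∧ α ∈ R.inv w := by
  have hαp := simples_subset_pos R hα
  have hmem : α ∈ R.inv w := (mem_invSet R).mpr ⟨hαp, h⟩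
  constructor
  · rw [len, len, inv_mul_reflect_of_neg R w hα h,
      Finset.card_image_of_injective _ (reflect α).injective,
      Finset.card_erase_of_mem hmem]
    have : 0 < (R.inv w).card := Finset.card_pos.mpr ⟨α, hmem⟩
    omega
  · exact hmem

theorem len_word_le (L : List E) (hL : ∀ γ ∈ L, γ ∈ R.simples) :
    R.len ((L.map reflect).prod) ≤ L.length := by
  induction L using List.reverseRecOn with
  | nil => simpa using Nat.le_of_eq (rs_len_one R)
  | append_singleton T α ih =>
    have hT : ∀ γ ∈ T, γ ∈ R.simples := fun γ hγ => hL γ (List.mem_append_left _ hγ)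
    have hα : α ∈ R.simples := hL α (List.mem_append_right _ (List.mem_singleton_self α))
    have hprod : ((T ++ [α]).map reflect).prod = (T.map reflect).prod * reflect α := by
      rw [List.map_append, List.prod_append, List.map_singleton, List.prod_singleton]
    rw [hprod]
    set w := (T.map reflect).prod with hw
    have hαroot : (w α) ∈ R.roots :=
      word_maps_roots R T (fun γ hγ => pos_subset R (simples_subset_pos R (hT γ hγ)))
        (pos_subset R (simples_subset_pos R hα))
    rcases root_dichotomy R hαroot with hpos | hneg
    · rw [len_mul_reflect_of_pos R w hα hpos]
      simpa using Nat.add_le_add_right (ih hT) 1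
    · have := (len_mul_reflect_of_neg R w hα hneg).1
      have h2 := ih hT
      simp only [List.length_append, List.length_singleton]
      omega

theorem word_prod_append (T : List E) (α : E) :
    ((T ++ [α]).map reflect).prod = (T.map reflect).prod * reflect α := by
  rw [List.map_append, List.prod_append, List.map_singleton, List.prod_singleton]

theorem word_prod_cons (γ : E) (T : List E) :
    ((γ :: T).map reflect).prod = reflect γ * (T.map reflect).prod := by
  rw [List.map_cons, List.prod_cons]

/-- The deletion lemma. -/
theorem deletion (L : List E) (hL : ∀ γ ∈ L, γ ∈ R.simples) {α : E} (hα : α ∈ R.simples)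
    (h : -((L.map reflect).prod α) ∈ R.pos) :
    ∃ L' : List E, (∀ γ ∈ L', γ ∈ R.simples) ∧
      (L'.map reflect).prod = (L.map reflect).prod * reflect α ∧ L'.length + 1 = L.length := by
  induction L with
  | nil =>
    exfalso
    have h2 : ((List.nil.map reflect).prod : E ≃ₗᵢ[ℝ] E) α = α := rfl
    rw [h2] at h
    exact not_both_pos R (simples_subset_pos R hα) h
  | cons γ T ih =>
    have hγ : γ ∈ R.simples := hL γ (List.mem_cons_self)
    have hT : ∀ δ ∈ T, δ ∈ R.simples := fun δ hδ => hL δ (List.mem_cons_of_mem γ hδ)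
    set u := (T.map reflect).prod with hu
    have hαr : α ∈ R.roots := pos_subset R (simples_subset_pos R hα)
    have huα : u α ∈ R.roots :=
      word_maps_roots R T (fun δ hδ => pos_subset R (simples_subset_pos R (hT δ hδ))) hαr
    have hLrw : ((γ :: T).map reflect).prod = reflect γ * u := word_prod_cons γ T
    rcases root_dichotomy R huα with hpos | hneg
    · -- u α positive, then u α = γ and we can delete
      have hkey : u α = γ := by
        by_contra hne
        have h2 : reflect γ (u α) ∈ R.pos := reflect_simple_pos R hγ hpos hne
        have h3 : -(reflect γ (u α)) ∈ R.pos := by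
          rw [hLrw] at h
          exact h
        exact not_both_pos R h2 h3
      have hconj : reflect γ = u * reflect α * u⁻¹ := by
        rw [← hkey]
        exact reflect_conj u α
      refine ⟨T, hT, ?_, by simp⟩
      rw [hLrw, hconj, inv_mul_cancel_right, mul_assoc, reflect_mul_self, mul_one]
    · obtain ⟨T', hT', hTp, hTl⟩ := ih hT hneg
      refine ⟨γ :: T', fun δ hδ => ?_, ?_, ?_⟩
      · rcases List.mem_cons.mp hδ with rfl | hδ'
        · exact hγ
        · exact hT' δ hδ'
      · rw [word_prod_cons, hTp, hLrw, mul_assoc]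
      · simp only [List.length_cons]
        omega

/-- Existence of reduced words. -/
theorem exists_reduced_word (L : List E) (hL : ∀ γ ∈ L, γ ∈ R.simples) :
    ∃ L' : List E, (∀ γ ∈ L', γ ∈ R.simples) ∧
      (L'.map reflect).prod = (L.map reflect).prod ∧
      L'.length = R.len ((L.map reflect).prod) := by
  suffices h : ∀ (n : ℕ) (L : List E), L.length ≤ n → (∀ γ ∈ L, γ ∈ R.simples) →
      ∃ L' : List E, (∀ γ ∈ L', γ ∈ R.simples) ∧
      (L'.map reflect).prod = (L.map reflect).prod ∧
      L'.length = R.len ((L.map reflect).prod) by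
    exact h L.length L (le_refl _) hL
  intro n
  induction n using Nat.strong_induction_on with
  | _ n ih =>
    intro L hlen hL
    rcases List.eq_nil_or_concat L with rfl | ⟨T, α, rfl⟩
    · exact ⟨[], by simp, rfl, by simpa using (rs_len_one R).symm⟩
    simp only [List.concat_eq_append] at hlen hL ⊢
    have hT : ∀ γ ∈ T, γ ∈ R.simples := fun γ hγ => hL γ (List.mem_append_left _ hγ)
    have hα : α ∈ R.simples := hL α (List.mem_append_right _ (List.mem_singleton_self α))
    have hαr : α ∈ R.roots := pos_subset R (simples_subset_pos R hα)
    set w' := (T.map reflect).prod with hw'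
    have hprodL : ((T ++ [α]).map reflect).prod = w' * reflect α := word_prod_append T α
    have hw'α : w' α ∈ R.roots :=
      word_maps_roots R T (fun δ hδ => pos_subset R (simples_subset_pos R (hT δ hδ))) hαr
    rcases root_dichotomy R hw'α with hpos | hneg
    · have hlt : T.length < n := by
        rw [List.length_append, List.length_singleton] at hlen
        omega
      obtain ⟨T', hT', hTp, hTl⟩ := ih T.length hlt T (le_refl _) hT
      refine ⟨T' ++ [α], ?_, ?_, ?_⟩
      · intro γ hγ
        rcases List.mem_append.mp hγ with h1 | h1
        · exact hT' γ h1
        · rw [List.mem_singleton.mp h1]; exact hα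
      · rw [word_prod_append, hTp, hprodL]
      · rw [hprodL, len_mul_reflect_of_pos R w' hα hpos, List.length_append,
          List.length_singleton, hTl]
    · obtain ⟨K, hK, hKp, hKl⟩ := deletion R T hT hα hneg
      have hlt : K.length < n := by
        rw [List.length_append, List.length_singleton] at hlen
        omega
      obtain ⟨L'', h1, h2, h3⟩ := ih K.length hlt K (le_refl _) hK
      refine ⟨L'', h1, ?_, ?_⟩
      · rw [h2, hKp, hprodL]
      · rw [h3, hKp, hprodL]

theorem word_inv (L : List E) :
    ((L.reverse).map reflect).prod = ((L.map reflect).prod)⁻¹ := by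
  induction L with
  | nil => simp
  | cons γ T ih =>
    rw [List.reverse_cons, word_prod_append, ih, word_prod_cons, mul_inv_rev, reflect_inv]

/-- Every reflection along a positive root is a product of simple reflections. -/
theorem pos_root_word {β : E} (hβ : β ∈ R.pos) :
    ∃ L : List E, (∀ γ ∈ L, γ ∈ R.simples) ∧ reflect β = (L.map reflect).prod := by
  suffices h : ∀ (n : ℕ) (β : E), β ∈ R.pos → meas R β ≤ n →
      ∃ L : List E, (∀ γ ∈ L, γ ∈ R.simples) ∧ reflect β = (L.map reflect).prod by
    exact h (meas R β) β hβ (le_refl _)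
  intro n
  induction n using Nat.strong_induction_on with
  | _ n ih =>
    intro β hβ hm
    by_cases hs : β ∈ R.simples
    · exact ⟨[β], by simpa using hs, by rw [List.map_singleton, List.prod_singleton]⟩
    · have hβr := pos_subset R hβ
      obtain ⟨c, hc, hce⟩ := pos_combo R hβ
      have hββ := root_inner_self_pos R hβr
      have hex : ∃ γ ∈ R.simples, 0 < ⟪β, γ⟫_ℝ := by
        by_contra hcon
        push_neg at hcon
        have h1 : ⟪β, β⟫_ℝ ≤ 0 := by
          nth_rewrite 2 [hce]
          rw [inner_sum]
          apply Finset.sum_nonpos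
          intro γ hγ
          rw [real_inner_smul_right]
          exact mul_nonpos_of_nonneg_of_nonpos (hc γ) (hcon γ hγ)
        linarith
      obtain ⟨γ, hγ, hβγ⟩ := hex
      have hγp := simples_subset_pos R hγ
      have hγr := pos_subset R hγp
      have hβγne : β ≠ γ := fun hc' => hs (hc' ▸ hγ)
      have hδp : reflect γ β ∈ R.pos := reflect_simple_pos R hγ hβ hβγne
      set δ := reflect γ β with hδ
      have hfun : R.posFun δ < R.posFun β := by
        rw [hδ, reflect_apply, map_sub, map_smul, smul_eq_mul]
        have h1 : 0 < 2 * ⟪β, γ⟫_ℝ / ⟪γ, γ⟫_ℝ :=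
          div_pos (by linarith) (root_inner_self_pos R hγr)
        have h2 := posFun_pos_of_mem R hγp
        nlinarith
      have hmlt : meas R δ < n := lt_of_lt_of_le (meas_lt R hδp hfun) hm
      obtain ⟨L0, hL0, hL0e⟩ := ih (meas R δ) hmlt δ hδp (le_refl _)
      refine ⟨γ :: (L0 ++ [γ]), ?_, ?_⟩
      · intro x hx
        rcases List.mem_cons.mp hx with rfl | hx'
        · exact hγ
        · rcases List.mem_append.mp hx' with h1 | h1
          · exact hL0 x h1
          · rw [List.mem_singleton.mp h1]; exact hγ
      · have hβδ : β = reflect γ δ := (reflect_reflect γ β).symm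
        rw [word_prod_cons, word_prod_append, ← hL0e]
        nth_rewrite 1 [hβδ]
        rw [reflect_conj (reflect γ) δ, reflect_inv, mul_assoc]

/-- Every reflection along a root is a product of simple reflections. -/
theorem root_word {β : E} (hβ : β ∈ R.roots) :
    ∃ L : List E, (∀ γ ∈ L, γ ∈ R.simples) ∧ reflect β = (L.map reflect).prod := by
  rcases root_dichotomy R hβ with h | h
  · exact pos_root_word R h
  · obtain ⟨L, hL, hLe⟩ := pos_root_word R h
    exact ⟨L, hL, by rw [← reflect_neg β]; exact hLe⟩

/-- Every element of the Weyl group is a product of simple reflections. -/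
theorem weyl_word {w : E ≃ₗᵢ[ℝ] E} (hw : w ∈ R.weyl) :
    ∃ L : List E, (∀ γ ∈ L, γ ∈ R.simples) ∧ (L.map reflect).prod = w := by
  induction hw using Subgroup.closure_induction with
  | mem x hx =>
    obtain ⟨β, hβ, rfl⟩ := hx
    obtain ⟨L, hL, hLe⟩ := root_word R hβ
    exact ⟨L, hL, hLe.symm⟩
  | one => exact ⟨[], by simp, by simp⟩
  | mul x y hx hy ihx ihy =>
    obtain ⟨Lx, hLx, hLxe⟩ := ihx
    obtain ⟨Ly, hLy, hLye⟩ := ihy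
    refine ⟨Lx ++ Ly, ?_, ?_⟩
    · intro γ hγ
      rcases List.mem_append.mp hγ with h1 | h1
      · exact hLx γ h1
      · exact hLy γ h1
    · rw [List.map_append, List.prod_append, hLxe, hLye]
  | inv x hx ihx =>
    obtain ⟨L, hL, hLe⟩ := ihx
    refine ⟨L.reverse, fun γ hγ => hL γ (List.mem_reverse.mp hγ), ?_⟩
    rw [word_inv, hLe]

section Sub

variable (D : Finset E) (hsub : D ⊆ R.roots)
  (hsymm : ∀ α ∈ D, -α ∈ D)
  (hclosed : ∀ α ∈ D, ∀ β ∈ D, α + β ∈ R.roots → α + β ∈ D)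

include hsub hsymm hclosed

theorem wordD_maps (L : List E) (hL : ∀ γ ∈ L, γ ∈ D) {δ : E} (hδ : δ ∈ D) :
    (L.map reflect).prod δ ∈ D := by
  induction L with
  | nil => simpa using hδ
  | cons γ T ih =>
    rw [word_prod_cons]
    show reflect γ ((T.map reflect).prod δ) ∈ D
    exact sub_stable R D hsub hsymm hclosed (hL γ (List.mem_cons_self))
      (ih (fun x hx => hL x (List.mem_cons_of_mem γ hx)))

theorem reduced_word_inv_subset (L : List E) (hLs : ∀ γ ∈ L, γ ∈ R.simples)
    (hLD : ∀ γ ∈ L, γ ∈ D) (hlen : L.length = R.len ((L.map reflect).prod)) :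
    R.inv ((L.map reflect).prod) ⊆ D := by
  induction L using List.reverseRecOn with
  | nil =>
    intro β hβ
    rw [List.map_nil, List.prod_nil, rs_inv_one] at hβ
    exact absurd hβ (Finset.notMem_empty β)
  | append_singleton T α ih =>
    have hT : ∀ γ ∈ T, γ ∈ R.simples := fun γ hγ => hLs γ (List.mem_append_left _ hγ)
    have hTD : ∀ γ ∈ T, γ ∈ D := fun γ hγ => hLD γ (List.mem_append_left _ hγ)
    have hα : α ∈ R.simples := hLs α (List.mem_append_right _ (List.mem_singleton_self α))
    have hαD : α ∈ D := hLD α (List.mem_append_right _ (List.mem_singleton_self α))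
    rw [word_prod_append] at hlen ⊢
    rw [List.length_append, List.length_singleton] at hlen
    set w' := (T.map reflect).prod with hw'
    have hw'le : R.len w' ≤ T.length := len_word_le R T hT
    have hw'α : w' α ∈ R.roots :=
      word_maps_roots R T (fun δ hδ => pos_subset R (simples_subset_pos R (hT δ hδ)))
        (pos_subset R (simples_subset_pos R hα))
    rcases root_dichotomy R hw'α with hpos | hneg
    · have hlw := len_mul_reflect_of_pos R w' hα hpos
      have hred : T.length = R.len w' := by omega
      have hIH := ih hT hTD hred
      rw [inv_mul_reflect_of_pos R w' hα hpos]
      intro β hβ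
      rcases Finset.mem_insert.mp hβ with rfl | hβ'
      · exact hαD
      · obtain ⟨δ, hδ, rfl⟩ := Finset.mem_image.mp hβ'
        exact sub_stable R D hsub hsymm hclosed hαD (hIH hδ)
    · exfalso
      have hlw := (len_mul_reflect_of_neg R w' hα hneg).1
      omega

theorem reduced_letters_mem (L : List E) (hLs : ∀ γ ∈ L, γ ∈ R.simples)
    (hlen : L.length = R.len ((L.map reflect).prod))
    (hinv : R.inv ((L.map reflect).prod) ⊆ D) :
    ∀ α ∈ L, α ∈ D := by
  induction L using List.reverseRecOn with
  | nil => intro α hα; exact absurd hα List.not_mem_nil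
  | append_singleton T α ih =>
    have hT : ∀ γ ∈ T, γ ∈ R.simples := fun γ hγ => hLs γ (List.mem_append_left _ hγ)
    have hα : α ∈ R.simples := hLs α (List.mem_append_right _ (List.mem_singleton_self α))
    rw [word_prod_append] at hlen hinv
    rw [List.length_append, List.length_singleton] at hlen
    set w' := (T.map reflect).prod with hw'
    have hw'le : R.len w' ≤ T.length := len_word_le R T hT
    have hw'α : w' α ∈ R.roots :=
      word_maps_roots R T (fun δ hδ => pos_subset R (simples_subset_pos R (hT δ hδ)))
        (pos_subset R (simples_subset_pos R hα))
    have hpos : w' α ∈ R.pos := by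
      rcases root_dichotomy R hw'α with hpos | hneg
      · exact hpos
      · exfalso
        have hlw := (len_mul_reflect_of_neg R w' hα hneg).1
        omega
    have hlw := len_mul_reflect_of_pos R w' hα hpos
    have hred : T.length = R.len w' := by omega
    rw [inv_mul_reflect_of_pos R w' hα hpos] at hinv
    have hαD : α ∈ D := hinv (Finset.mem_insert_self α _)
    have hinv' : R.inv w' ⊆ D := by
      intro δ hδ
      have h1 : reflect α δ ∈ D := by
        apply hinv
        exact Finset.mem_insert_of_mem (Finset.mem_image_of_mem _ hδ)
      have h2 := sub_stable R D hsub hsymm hclosed hαD h1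
      rwa [reflect_reflect] at h2
    have hIH := ih hT hred hinv'
    intro γ hγ
    rcases List.mem_append.mp hγ with h1 | h1
    · exact hIH γ h1
    · rw [List.mem_singleton.mp h1]; exact hαD

end Sub

end Aux

/-- Lemma 3.2: for a symmetric closed subsystem `Δ ⊆ Δ̃` and `w̃ ∈ W̃`, the following are
equivalent: (i) every reduced expression of `w̃` consists of simple reflections along roots in
`Δ⁺ = Δ ∩ Δ̃⁺`; (ii) `w̃` lies in the reflection subgroup `W` generated by `Δ` and its length in
`W` equals its length in `W̃`; (iii) `Φ_{w̃} ⊆ Δ`. -/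
theorem subsystem_length_tfae
    (R : RootSystemData E) (D : Finset E)
    (hsub : D ⊆ R.roots)
    (hsymm : ∀ α ∈ D, -α ∈ D)
    (hclosed : ∀ α ∈ D, ∀ β ∈ D, α + β ∈ R.roots → α + β ∈ D)
    (w : E ≃ₗᵢ[ℝ] E) (hw : w ∈ R.weyl) :
    ((∀ L : List E, (∀ α ∈ L, α ∈ R.simples) →
        (L.map RootSystemData.reflect).prod = w → L.length = R.len w →
        ∀ α ∈ L, α ∈ D ∩ R.pos)
      ↔ (w ∈ subWeyl D ∧ subLen R D w = R.len w))
    ∧ ((w ∈ subWeyl D ∧ subLen R D w = R.len w) ↔ R.inv w ⊆ D) := by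
  classical
  have hAsub : ((D ∩ R.pos).filter fun α => -(w α) ∈ D ∩ R.pos) ⊆ R.inv w := by
    intro β hβ
    rw [Finset.mem_filter] at hβ
    rw [mem_invSet]
    exact ⟨(Finset.mem_inter.mp hβ.1).2, (Finset.mem_inter.mp hβ.2).2⟩
  have h23 : subLen R D w = R.len w → R.inv w ⊆ D := by
    intro h2
    have hcard : (R.inv w).card ≤ ((D ∩ R.pos).filter fun α => -(w α) ∈ D ∩ R.pos).card :=
      le_of_eq h2.symm
    have heq := Finset.eq_of_subset_of_card_le hAsub hcard
    intro β hβ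
    rw [← heq] at hβ
    exact (Finset.mem_inter.mp (Finset.mem_filter.mp hβ).1).1
  have h31 : R.inv w ⊆ D → ∀ L : List E, (∀ α ∈ L, α ∈ R.simples) →
      (L.map RootSystemData.reflect).prod = w → L.length = R.len w →
      ∀ α ∈ L, α ∈ D ∩ R.pos := by
    intro h3 L hsimp hprod hlen α hα
    have hD := reduced_letters_mem R D hsub hsymm hclosed L hsimp
      (by rw [hprod]; exact hlen) (by rw [hprod]; exact h3) α hα
    exact Finset.mem_inter.mpr ⟨hD, simples_subset_pos R (hsimp α hα)⟩
  obtain ⟨L₀, hL₀s, hL₀p⟩ := weyl_word R hw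
  obtain ⟨L, hLs, hLp, hLl⟩ := exists_reduced_word R L₀ hL₀s
  rw [hL₀p] at hLp hLl
  have hword2 : (∀ α ∈ L, α ∈ D ∩ R.pos) → (w ∈ subWeyl D ∧ subLen R D w = R.len w) := by
    intro hLD
    have hLD' : ∀ α ∈ L, α ∈ D := fun α hα => (Finset.mem_inter.mp (hLD α hα)).1
    constructor
    · rw [← hLp]
      apply Subgroup.list_prod_mem
      intro x hx
      rw [List.mem_map] at hx
      obtain ⟨γ, hγ, rfl⟩ := hx
      exact Subgroup.subset_closure ⟨γ, hLD' γ hγ, rfl⟩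
    · have hinvD : R.inv w ⊆ D := by
        rw [← hLp]
        exact reduced_word_inv_subset R D hsub hsymm hclosed L hLs hLD'
          (by rw [hLp]; exact hLl)
      have hset : ((D ∩ R.pos).filter fun α => -(w α) ∈ D ∩ R.pos) = R.inv w := by
        apply Finset.Subset.antisymm hAsub
        intro β hβ
        have hβD : β ∈ D := hinvD hβ
        rw [mem_invSet] at hβ
        have hwβ : w β ∈ D := by
          rw [← hLp]
          exact wordD_maps R D hsub hsymm hclosed L hLD' hβD
        rw [Finset.mem_filter]
        exact ⟨Finset.mem_inter.mpr ⟨hβD, hβ.1⟩,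
          Finset.mem_inter.mpr ⟨hsymm _ hwβ, hβ.2⟩⟩
      show ((D ∩ R.pos).filter fun α => -(w α) ∈ D ∩ R.pos).card = R.len w
      rw [hset]
      rfl
  refine ⟨⟨?_, ?_⟩, ?_, ?_⟩
  · intro h1
    exact hword2 (h1 L hLs hLp hLl)
  · rintro ⟨h2a, h2b⟩
    exact h31 (h23 h2b)
  · rintro ⟨h2a, h2b⟩
    exact h23 h2b
  · intro h3
    exact hword2 (h31 h3 L hLs hLp hLl)
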